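/- arXiv:2208.06037 — 4 statements merged into one kernel-verified Lean document; each statement's English description precedes it below -/
import Mathlib

section
/- Let X be a real random variable on a probability space with E[X] = 0. Let K > 0 be such that the random variable exp(|X|/K) is integrable and E[exp(|X|/K) − 1 − |X|/K] ≤ 1. Then for every real h with |h|·K ≤ 1, E[exp(hX)] ≤ 1 + h²K², and hence E[exp(hX)] ≤ exp(h²K²). -/
open MeasureTheory ProbabilityTheory
open Set


lemma expAux1 (t : ℝ) : Real.exp t - 1 - t ≤ Real.exp |t| - 1 - |t| := by
  rcases le_or_gt 0 t with ht | ht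
  · rw [abs_of_nonneg ht]
  · rw [abs_of_neg ht]
    have hs : Real.sinh t < t := Real.sinh_lt_self_iff.2 ht
    rw [Real.sinh_eq] at hs
    linarith

lemma expConvexAux {a u : ℝ} (ha0 : 0 ≤ a) (ha1 : a ≤ 1) :
    Real.exp (a * u) - 1 ≤ a * (Real.exp u - 1) := by
  have := convexOn_exp.2 (Set.mem_univ u) (Set.mem_univ (0:ℝ)) ha0
    (by linarith : (0:ℝ) ≤ 1 - a) (by ring)
  simp only [smul_eq_mul, mul_zero, add_zero, Real.exp_zero, mul_one] at this
  linarith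

lemma psiScale {a u : ℝ} (ha0 : 0 ≤ a) (ha1 : a ≤ 1) (hu : 0 ≤ u) :
    Real.exp (a * u) - 1 - a * u ≤ a ^ 2 * (Real.exp u - 1 - u) := by
  set F : ℝ → ℝ := fun u => a ^ 2 * (Real.exp u - 1 - u) - (Real.exp (a * u) - 1 - a * u)
    with hF
  have hderiv : ∀ x : ℝ, HasDerivAt F (a ^ 2 * (Real.exp x - 1) - a * (Real.exp (a * x) - 1)) x := by
    intro x
    have h1 : HasDerivAt (fun x : ℝ => Real.exp x - 1 - x) (Real.exp x - 1) x :=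
      ((Real.hasDerivAt_exp x).sub_const 1).sub (hasDerivAt_id x)
    have h2 : HasDerivAt (fun x : ℝ => a * x) a x := by
      simpa using (hasDerivAt_id x).const_mul a
    have h3 : HasDerivAt (fun x : ℝ => Real.exp (a * x) - 1 - a * x)
        (Real.exp (a * x) * a - a) x := (h2.exp.sub_const 1).sub h2
    have := (h1.const_mul (a ^ 2)).sub h3
    exact this.congr_deriv (by ring)
  have hmono : MonotoneOn F (Ici (0:ℝ)) := by
    apply monotoneOn_of_deriv_nonneg (convex_Ici 0)
      (fun x _ => (hderiv x).continuousAt.continuousWithinAt)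
      (fun x _ => ((hderiv x).differentiableAt).differentiableWithinAt)
    intro x hx
    rw [(hderiv x).deriv]
    have hx0 : 0 < x := by simpa using hx
    have h4 : Real.exp (a * x) - 1 ≤ a * (Real.exp x - 1) := expConvexAux ha0 ha1
    have h5 : 0 ≤ Real.exp x - 1 := by
      have := Real.one_le_exp hx0.le; linarith
    nlinarith
  have h0 : F 0 = 0 := by simp [hF]
  have := hmono (self_mem_Ici) hu hu
  rw [h0] at this
  simp only [hF] at this
  linarith

/-- Theorem 1: if `E X = 0` and `K > 0` is admissible for the `ψ₁₁` Orlicz norm of `X`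
(i.e. `E[exp(|X|/K) − 1 − |X|/K] ≤ 1`), then for every real `h` with `|h| K ≤ 1`,
`E[exp(hX)] ≤ 1 + h² K² ≤ exp(h² K²)`. -/
theorem mgf_le_of_psi11_norm_le {Ω : Type*} [MeasureSpace Ω]
    [IsProbabilityMeasure (ℙ : Measure Ω)] (X : Ω → ℝ)
    (hXint : Integrable X) (hmean : ∫ ω, X ω = 0)
    (K : ℝ) (hK : 0 < K)
    (hint : Integrable (fun ω => Real.exp (|X ω| / K)))
    (horlicz : ∫ ω, (Real.exp (|X ω| / K) - 1 - |X ω| / K) ≤ 1)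
    (h : ℝ) (hh : |h| * K ≤ 1) :
    (∫ ω, Real.exp (h * X ω)) ≤ 1 + h ^ 2 * K ^ 2 ∧
      (∫ ω, Real.exp (h * X ω)) ≤ Real.exp (h ^ 2 * K ^ 2) := by
  have hψint : Integrable (fun ω => Real.exp (|X ω| / K) - 1 - |X ω| / K) :=
    (hint.sub (integrable_const 1)).sub (hXint.abs.div_const K)
  -- pointwise bound
  have hpt : ∀ ω, Real.exp (h * X ω) ≤
      1 + h * X ω + h ^ 2 * K ^ 2 * (Real.exp (|X ω| / K) - 1 - |X ω| / K) := by
    intro ω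
    set x := X ω
    have habs : |h * x| = (|h| * K) * (|x| / K) := by
      rw [abs_mul]; field_simp
    have h1 : Real.exp (h * x) - 1 - h * x ≤ Real.exp |h * x| - 1 - |h * x| := expAux1 _
    have h2 : Real.exp ((|h| * K) * (|x| / K)) - 1 - (|h| * K) * (|x| / K)
        ≤ (|h| * K) ^ 2 * (Real.exp (|x| / K) - 1 - |x| / K) :=
      psiScale (by positivity) hh (by positivity)
    rw [habs] at h1
    have h3 : (|h| * K) ^ 2 = h ^ 2 * K ^ 2 := by
      rw [mul_pow, sq_abs]
    rw [h3] at h2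
    linarith
  -- integrability of exp (h X)
  have hmeas : AEStronglyMeasurable (fun ω => Real.exp (h * X ω)) ℙ :=
    (Real.continuous_exp.comp_aestronglyMeasurable
      (hXint.aestronglyMeasurable.const_mul h))
  have hexp_int : Integrable (fun ω => Real.exp (h * X ω)) := by
    refine hint.mono hmeas (Filter.Eventually.of_forall fun ω => ?_)
    have hhK : |h| ≤ 1 / K := by
      rw [le_div_iff₀ hK]; exact hh
    have : h * X ω ≤ |X ω| / K := by
      calc h * X ω ≤ |h * X ω| := le_abs_self _
        _ = |h| * |X ω| := abs_mul _ _
        _ ≤ (1 / K) * |X ω| := by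
            exact mul_le_mul_of_nonneg_right hhK (abs_nonneg _)
        _ = |X ω| / K := by ring
    simp only [Real.norm_eq_abs, Real.abs_exp]
    exact Real.exp_le_exp.2 this
  have hg_int : Integrable (fun ω =>
      1 + h * X ω + h ^ 2 * K ^ 2 * (Real.exp (|X ω| / K) - 1 - |X ω| / K)) :=
    ((integrable_const 1).add (hXint.const_mul h)).add (hψint.const_mul _)
  have hle := integral_mono hexp_int hg_int hpt
  have hcalc : (∫ ω, (1 + h * X ω + h ^ 2 * K ^ 2 * (Real.exp (|X ω| / K) - 1 - |X ω| / K)))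
      ≤ 1 + h ^ 2 * K ^ 2 := by
    have hA : Integrable (fun ω => 1 + h * X ω) := (integrable_const 1).add (hXint.const_mul h)
    have hB : Integrable (fun ω => h * X ω) := hXint.const_mul h
    rw [integral_add hA (hψint.const_mul _),
      integral_add (integrable_const 1) hB,
      integral_const, integral_const_mul, integral_const_mul, hmean]
    have : (0:ℝ) ≤ h ^ 2 * K ^ 2 := by positivity
    simp only [probReal_univ, measure_univ, ENNReal.toReal_one, smul_eq_mul, one_mul, mul_zero, add_zero]
    nlinarith [mul_le_mul_of_nonneg_left horlicz this]
  have hfirst : (∫ ω, Real.exp (h * X ω)) ≤ 1 + h ^ 2 * K ^ 2 := le_trans hle hcalc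
  exact ⟨hfirst, hfirst.trans (by linarith [Real.add_one_le_exp (h ^ 2 * K ^ 2)])⟩
end

section
/- Let X₁, …, Xₙ be independent real random variables on a probability space with E[Xᵢ] = 0 for each i, and let K₁, …, Kₙ > 0 be such that for each i, exp(|Xᵢ|/Kᵢ) is integrable and E[exp(|Xᵢ|/Kᵢ) − 1 − |Xᵢ|/Kᵢ] ≤ 1. Set Sₙ = X₁ + ⋯ + Xₙ, B² = K₁² + ⋯ + Kₙ², and M = max(K₁, …, Kₙ). Then for every real x with 0 ≤ x ≤ 2B²/M, P(Sₙ ≥ x) ≤ exp(−x²/(4B²)). -/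
open MeasureTheory ProbabilityTheory Finset

lemma exp_le_aux (v : ℝ) : Real.exp v ≤ 1 + v + (Real.exp |v| - 1 - |v|) := by
  rcases le_or_gt 0 v with h | h
  · rw [abs_of_nonneg h]; ring_nf; exact le_refl _
  · rw [abs_of_neg h]
    have hs : Real.sinh v ≤ v := Real.sinh_le_self_iff.2 h.le
    rw [Real.sinh_eq] at hs
    linarith

lemma psi_smul {l u : ℝ} (hl0 : 0 ≤ l) (hl1 : l ≤ 1) (hu : 0 ≤ u) :
    Real.exp (l * u) - 1 - l * u ≤ l ^ 2 * (Real.exp u - 1 - u) := by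
  set g : ℝ → ℝ := fun y => l ^ 2 * (Real.exp y - 1 - y) - (Real.exp (l * y) - 1 - l * y) with hg
  have hder : ∀ y : ℝ, HasDerivAt g (l ^ 2 * (Real.exp y - 1) - l * (Real.exp (l * y) - 1)) y := by
    intro y
    have h1 : HasDerivAt (fun y : ℝ => Real.exp y - 1 - y) (Real.exp y - 1) y := by
      exact ((Real.hasDerivAt_exp y).sub_const 1).sub (hasDerivAt_id' y)
    have h2 : HasDerivAt (fun y : ℝ => Real.exp (l * y) - 1 - l * y) (l * Real.exp (l * y) - l) y := by
      have he : HasDerivAt (fun y : ℝ => Real.exp (l * y)) (Real.exp (l * y) * l) y :=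
        by have := ((hasDerivAt_id' y).const_mul l).exp; rwa [mul_one] at this
      have := (he.sub_const 1).sub ((hasDerivAt_id' y).const_mul l)
      rw [show l * Real.exp (l * y) - l = Real.exp (l * y) * l - l * 1 by ring]; exact this
    have := (h1.const_mul (l ^ 2)).sub h2
    rw [show l ^ 2 * (Real.exp y - 1) - l * (Real.exp (l * y) - 1) = l ^ 2 * (Real.exp y - 1) - (l * Real.exp (l * y) - l) by ring]
    exact this
  have hconv : ∀ y : ℝ, Real.exp (l * y) - 1 ≤ l * (Real.exp y - 1) := by
    intro y
    have := convexOn_exp.2 (Set.mem_univ (0 : ℝ)) (Set.mem_univ y) (by linarith : (0:ℝ) ≤ 1 - l) hl0 (by ring)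
    simp only [smul_eq_mul, mul_zero, zero_add, Real.exp_zero, mul_one] at this
    nlinarith [this]
  have hmono : MonotoneOn g (Set.Ici (0 : ℝ)) := by
    apply monotoneOn_of_deriv_nonneg (convex_Ici 0)
    · exact (Differentiable.continuous (fun y => (hder y).differentiableAt)).continuousOn
    · exact fun y _ => ((hder y).differentiableAt).differentiableWithinAt
    · intro y hy
      rw [(hder y).deriv]
      rw [interior_Ici] at hy
      have h1 := hconv y
      have h2 : (0:ℝ) ≤ Real.exp y - 1 := by
        have : (0:ℝ) < y := hy
        nlinarith [Real.add_one_le_exp y]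
      nlinarith [h1, h2, sq_nonneg l]
  have h0 : g 0 ≤ g u := hmono (Set.mem_Ici.2 (le_refl 0)) hu hu
  simp only [hg, mul_zero, Real.exp_zero] at h0
  linarith

lemma mgf_single {Ω : Type*} [MeasureSpace Ω] [IsProbabilityMeasure (ℙ : Measure Ω)]
    (Y : Ω → ℝ) (K t : ℝ) (hK : 0 < K) (ht0 : 0 ≤ t) (htK : t * K ≤ 1)
    (hYint : Integrable Y) (hmean : ∫ ω, Y ω = 0)
    (hint : Integrable (fun ω => Real.exp (|Y ω| / K)))
    (horlicz : ∫ ω, (Real.exp (|Y ω| / K) - 1 - |Y ω| / K) ≤ 1) :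
    Integrable (fun ω => Real.exp (t * Y ω)) ∧
      ∫ ω, Real.exp (t * Y ω) ≤ Real.exp (t ^ 2 * K ^ 2) := by
  have habs : ∀ ω, |t * Y ω| = (t * K) * (|Y ω| / K) := by
    intro ω
    rw [abs_mul, abs_of_nonneg ht0]
    field_simp
  have hpt : ∀ ω, Real.exp (t * Y ω) ≤
      1 + t * Y ω + (t * K) ^ 2 * (Real.exp (|Y ω| / K) - 1 - |Y ω| / K) := by
    intro ω
    refine (exp_le_aux (t * Y ω)).trans ?_
    have h2 := psi_smul (mul_nonneg ht0 hK.le) htK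
      (div_nonneg (abs_nonneg (Y ω)) hK.le)
    rw [habs ω]
    linarith [h2]
  have hintexp : Integrable (fun ω => Real.exp (t * Y ω)) := by
    apply hint.mono
    · exact (Real.measurable_exp.comp_aemeasurable
        (hYint.aemeasurable.const_mul t)).aestronglyMeasurable
    · filter_upwards with ω
      rw [Real.norm_eq_abs, Real.norm_eq_abs, abs_of_pos (Real.exp_pos _),
        abs_of_pos (Real.exp_pos _)]
      apply Real.exp_le_exp.2
      calc t * Y ω ≤ |t * Y ω| := le_abs_self _
        _ = (t * K) * (|Y ω| / K) := habs ω
        _ ≤ 1 * (|Y ω| / K) := by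
            apply mul_le_mul_of_nonneg_right htK (div_nonneg (abs_nonneg _) hK.le)
        _ = |Y ω| / K := one_mul _
  refine ⟨hintexp, ?_⟩
  have hpsi_int : Integrable (fun ω => Real.exp (|Y ω| / K) - 1 - |Y ω| / K) := by
    apply (hint.sub (integrable_const 1)).sub
    simpa [div_eq_mul_inv] using hYint.abs.mul_const K⁻¹
  have hrhs_int : Integrable (fun ω =>
      1 + t * Y ω + (t * K) ^ 2 * (Real.exp (|Y ω| / K) - 1 - |Y ω| / K)) := by
    exact ((integrable_const 1).add (hYint.const_mul t)).add (hpsi_int.const_mul _)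
  calc ∫ ω, Real.exp (t * Y ω)
      ≤ ∫ ω, (1 + t * Y ω + (t * K) ^ 2 * (Real.exp (|Y ω| / K) - 1 - |Y ω| / K)) :=
        integral_mono hintexp hrhs_int hpt
    _ = 1 + t * (∫ ω, Y ω) + (t * K) ^ 2 * (∫ ω, (Real.exp (|Y ω| / K) - 1 - |Y ω| / K)) := by
        have hA : Integrable (fun ω => 1 + t * Y ω) (ℙ : Measure Ω) :=
          (integrable_const 1).add (hYint.const_mul t)
        have e1 : (∫ ω, (1 + t * Y ω + (t * K) ^ 2 * (Real.exp (|Y ω| / K) - 1 - |Y ω| / K)))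
            = (∫ ω, (1 + t * Y ω)) + ∫ ω, (t * K) ^ 2 * (Real.exp (|Y ω| / K) - 1 - |Y ω| / K) :=
          integral_add hA (hpsi_int.const_mul _)
        have e2 : (∫ ω, (1 + t * Y ω)) = (∫ ω, (1:ℝ)) + ∫ ω, t * Y ω :=
          integral_add (integrable_const 1) (hYint.const_mul t)
        rw [e1, e2, integral_const, integral_const_mul, integral_const_mul]
        simp [measure_univ]
    _ ≤ 1 + t ^ 2 * K ^ 2 := by
        rw [show (∫ ω, Y ω) = 0 from hmean, mul_zero, add_zero]
        have h1 : (t * K) ^ 2 * (∫ ω, (Real.exp (|Y ω| / K) - 1 - |Y ω| / K)) ≤ (t*K)^2 * 1 :=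
          mul_le_mul_of_nonneg_left horlicz (sq_nonneg _)
        nlinarith [h1]
    _ ≤ Real.exp (t ^ 2 * K ^ 2) := by linarith [Real.add_one_le_exp (t ^ 2 * K ^ 2)]

lemma iIndepFun_ae_congr {Ω : Type*} [MeasurableSpace Ω] {μ : Measure Ω}
    {ι : Type*} [Countable ι] {X X' : ι → Ω → ℝ}
    (h : ∀ i, X i =ᵐ[μ] X' i)
    (hindep : iIndepFun X μ) :
    iIndepFun X' μ := by
  rw [iIndepFun_iff_measure_inter_preimage_eq_mul] at hindep ⊢
  intro S sets hsets
  have hae : ∀ᵐ ω ∂μ, ∀ i, X i ω = X' i ω := ae_all_iff.2 h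
  have h1 : μ (⋂ i ∈ S, X' i ⁻¹' sets i) = μ (⋂ i ∈ S, X i ⁻¹' sets i) := by
    apply measure_congr
    filter_upwards [hae] with ω hω
    change (ω ∈ ⋂ i ∈ S, X' i ⁻¹' sets i) = (ω ∈ ⋂ i ∈ S, X i ⁻¹' sets i)
    simp only [Set.mem_iInter, Set.mem_preimage, eq_iff_iff]
    exact ⟨fun hm j hj => by rw [hω j]; exact hm j hj,
      fun hm j hj => by rw [← hω j]; exact hm j hj⟩
  have h2 : ∀ i, μ (X' i ⁻¹' sets i) = μ (X i ⁻¹' sets i) := by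
    intro i
    apply measure_congr
    filter_upwards [h i] with ω hω
    change (X' i ω ∈ sets i) = (X i ω ∈ sets i)
    rw [hω]
  rw [h1, hindep S hsets]
  exact Finset.prod_congr rfl fun i _ => (h2 i).symm

/-- Theorem 2, first case: for independent mean-zero `Xᵢ` with admissible `ψ₁₁`-Orlicz
constants `Kᵢ`, with `B² = ∑ Kᵢ²` and `M = max Kᵢ`, one has
`P(Sₙ ≥ x) ≤ exp(−x²/(4B²))` for `0 ≤ x ≤ 2B²/M`. -/
theorem tail_le_gaussian_part {Ω : Type*} [MeasureSpace Ω]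
    [IsProbabilityMeasure (ℙ : Measure Ω)]
    {ι : Type*} [Fintype ι] [Nonempty ι]
    (X : ι → Ω → ℝ) (K : ι → ℝ)
    (hindep : iIndepFun X ℙ)
    (hXint : ∀ i, Integrable (X i)) (hmean : ∀ i, ∫ ω, X i ω = 0)
    (hK : ∀ i, 0 < K i)
    (hint : ∀ i, Integrable (fun ω => Real.exp (|X i ω| / K i)))
    (horlicz : ∀ i, ∫ ω, (Real.exp (|X i ω| / K i) - 1 - |X i ω| / K i) ≤ 1)
    (B M : ℝ) (hB : B ^ 2 = ∑ i, K i ^ 2)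
    (hM : M = Finset.univ.sup' Finset.univ_nonempty K)
    (x : ℝ) (hx0 : 0 ≤ x) (hx : x ≤ 2 * B ^ 2 / M) :
    (ℙ {ω | x ≤ ∑ i, X i ω}).toReal ≤ Real.exp (-(x ^ 2 / (4 * B ^ 2))) := by
  classical
  -- replace X by a measurable modification X'
  set X' : ι → Ω → ℝ := fun i => (hXint i).1.mk (X i) with hX'
  have h_ae : ∀ i, X i =ᵐ[ℙ] X' i := fun i => (hXint i).1.ae_eq_mk
  have hmeas' : ∀ i, Measurable (X' i) := fun i => (hXint i).1.stronglyMeasurable_mk.measurable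
  have hindep' : iIndepFun X' ℙ := iIndepFun_ae_congr h_ae hindep
  have hXint' : ∀ i, Integrable (X' i) := fun i => (hXint i).congr (h_ae i)
  have hmean' : ∀ i, ∫ ω, X' i ω = 0 := fun i => by
    rw [← integral_congr_ae (h_ae i)]; exact hmean i
  have hint' : ∀ i, Integrable (fun ω => Real.exp (|X' i ω| / K i)) := fun i =>
    (hint i).congr (by filter_upwards [h_ae i] with ω h; rw [h])
  have horlicz' : ∀ i, ∫ ω, (Real.exp (|X' i ω| / K i) - 1 - |X' i ω| / K i) ≤ 1 := fun i => by
    refine le_trans (le_of_eq (integral_congr_ae ?_)) (horlicz i)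
    filter_upwards [h_ae i] with ω h; rw [h]
  -- positivity facts
  have hB2 : 0 < B ^ 2 := by
    rw [hB]; exact Finset.sum_pos (fun i _ => pow_pos (hK i) 2) Finset.univ_nonempty
  obtain ⟨i₀⟩ := ‹Nonempty ι›
  have hKM : ∀ i, K i ≤ M := fun i => hM ▸ Finset.le_sup' K (Finset.mem_univ i)
  have hMpos : 0 < M := lt_of_lt_of_le (hK i₀) (hKM i₀)
  -- the Chernoff parameter
  set t : ℝ := x / (2 * B ^ 2) with ht_def
  have ht0 : 0 ≤ t := div_nonneg hx0 (by positivity)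
  have htM : t * M ≤ 1 := by
    have h1 : x * M ≤ 2 * B ^ 2 := (le_div_iff₀ hMpos).1 hx
    rw [ht_def, div_mul_eq_mul_div, div_le_one (by positivity)]
    linarith
  have htK : ∀ i, t * K i ≤ 1 := fun i =>
    le_trans (mul_le_mul_of_nonneg_left (hKM i) ht0) htM
  -- per-coordinate bounds
  have hsingle := fun i => mgf_single (X' i) (K i) t (hK i) ht0 (htK i)
    (hXint' i) (hmean' i) (hint' i) (horlicz' i)
  have hi_int : ∀ i, Integrable (fun ω => Real.exp (t * X' i ω)) := fun i => (hsingle i).1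
  have hi_bd : ∀ i, mgf (X' i) ℙ t ≤ Real.exp (t ^ 2 * K i ^ 2) := fun i => (hsingle i).2
  -- Chernoff bound
  have hS_int : Integrable (fun ω => Real.exp (t * (∑ i, X' i) ω)) :=
    hindep'.integrable_exp_mul_sum hmeas' (fun i _ => hi_int i)
  have chern := measure_ge_le_exp_mul_mgf (X := ∑ i, X' i) (μ := ℙ) x ht0 hS_int
  have hmgf : mgf (∑ i, X' i) ℙ t ≤ Real.exp (t ^ 2 * B ^ 2) := by
    rw [hindep'.mgf_sum hmeas']
    calc ∏ i, mgf (X' i) ℙ t ≤ ∏ i, Real.exp (t ^ 2 * K i ^ 2) :=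
          Finset.prod_le_prod (fun i _ => mgf_nonneg) (fun i _ => hi_bd i)
      _ = Real.exp (∑ i, t ^ 2 * K i ^ 2) := (Real.exp_sum _ _).symm
      _ = Real.exp (t ^ 2 * B ^ 2) := by rw [← Finset.mul_sum, ← hB]
  -- identify the sets
  have hPeq : ℙ {ω | x ≤ ∑ i, X i ω} = ℙ {ω | x ≤ (∑ i, X' i) ω} := by
    apply measure_congr
    filter_upwards [ae_all_iff.2 h_ae] with ω hω
    change (x ≤ ∑ i, X i ω) = (x ≤ (∑ i, X' i) ω)
    rw [Finset.sum_apply, Finset.sum_congr rfl fun i _ => hω i]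
  rw [hPeq]
  refine le_trans chern ?_
  calc Real.exp (-t * x) * mgf (∑ i, X' i) ℙ t
      ≤ Real.exp (-t * x) * Real.exp (t ^ 2 * B ^ 2) :=
        mul_le_mul_of_nonneg_left hmgf (Real.exp_pos _).le
    _ = Real.exp (t ^ 2 * B ^ 2 - t * x) := by rw [← Real.exp_add]; ring_nf
    _ = Real.exp (-(x ^ 2 / (4 * B ^ 2))) := by
        congr 1
        rw [ht_def]
        field_simp
        ring
end

section
/- Let X₁, …, Xₙ be independent real random variables on a probability space with E[Xᵢ] = 0 for each i, and let K₁, …, Kₙ > 0 be such that for each i, exp(|Xᵢ|/Kᵢ) is integrable and E[exp(|Xᵢ|/Kᵢ) − 1 − |Xᵢ|/Kᵢ] ≤ 1. Set Sₙ = X₁ + ⋯ + Xₙ, B² = K₁² + ⋯ + Kₙ², and M = max(K₁, …, Kₙ). Then for every real x with x ≥ 2B²/M, P(Sₙ ≥ x) ≤ exp(−(x/M − B²/M²)). -/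
open MeasureTheory ProbabilityTheory Finset

/-- `ψ₁₁(c·v) ≤ c² ψ₁₁(v)` for `0 ≤ c ≤ 1`, `0 ≤ v`. -/
lemma psi_mul_le {c : ℝ} (hc0 : 0 ≤ c) (hc1 : c ≤ 1) {v : ℝ} (hv : 0 ≤ v) :
    Real.exp (c * v) - 1 - c * v ≤ c ^ 2 * (Real.exp v - 1 - v) := by
  have hconv : ∀ w : ℝ, Real.exp (c * w) ≤ c * Real.exp w + (1 - c) := by
    intro w
    have h := convexOn_exp.2 (Set.mem_univ w) (Set.mem_univ 0) hc0
      (by linarith : (0:ℝ) ≤ 1 - c) (by ring)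
    simpa [smul_eq_mul] using h
  set g : ℝ → ℝ := fun w => c ^ 2 * (Real.exp w - 1 - w) - (Real.exp (c * w) - 1 - c * w)
    with hg_def
  have hd : ∀ w : ℝ, HasDerivAt g
      (c ^ 2 * (Real.exp w - 1) - (Real.exp (c * w) * c - c)) w := by
    intro w
    have h1 : HasDerivAt (fun w : ℝ => Real.exp w - 1 - w) (Real.exp w - 1) w := by
      exact ((Real.hasDerivAt_exp w).sub_const 1).sub (hasDerivAt_id w)
    have h2 : HasDerivAt (fun w : ℝ => Real.exp (c * w)) (Real.exp (c * w) * c) w := by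
      simpa using ((hasDerivAt_id w).const_mul c).exp
    have h3 : HasDerivAt (fun w : ℝ => Real.exp (c * w) - 1 - c * w)
        (Real.exp (c * w) * c - c) w := by
      have h := (h2.sub_const 1).sub ((hasDerivAt_id w).const_mul c); rw [mul_one] at h; exact h
    exact (h1.const_mul (c ^ 2)).sub h3
  have hmono : MonotoneOn g (Set.Ici (0:ℝ)) := by
    apply monotoneOn_of_deriv_nonneg (convex_Ici 0)
    · exact fun w _ => ((hd w).continuousAt).continuousWithinAt
    · exact fun w _ => ((hd w).differentiableAt).differentiableWithinAt
    · intro w _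
      rw [(hd w).deriv]
      have := hconv w
      nlinarith [Real.exp_pos w, sq_nonneg c]
  have h0 : g 0 ≤ g v := hmono Set.self_mem_Ici hv hv
  have : g 0 = 0 := by simp [hg_def]
  rw [this] at h0
  simp only [hg_def] at h0
  linarith

/-- `ψ₁₁(s) ≤ ψ₁₁(|s|)`. -/
lemma psi_le_psi_abs (s : ℝ) :
    Real.exp s - 1 - s ≤ Real.exp |s| - 1 - |s| := by
  rcases le_or_gt 0 s with h | h
  · rw [abs_of_nonneg h]
  · rw [abs_of_neg h]
    have hs : Real.sinh s ≤ s := Real.sinh_le_self_iff.2 h.le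
    rw [Real.sinh_eq] at hs
    linarith

/-- a.e. congruence for `iIndepFun` (real-valued). -/
lemma iIndepFun_congr_ae {Ω ι : Type*} [MeasurableSpace Ω] {μ : Measure Ω} [Countable ι]
    {X X' : ι → Ω → ℝ}
    (h : iIndepFun X μ) (heq : ∀ i, X i =ᵐ[μ] X' i) :
    iIndepFun X' μ := by
  rw [ProbabilityTheory.iIndepFun_iff_measure_inter_preimage_eq_mul] at h ⊢
  intro S sets hsets
  have hpre : ∀ i, (X i ⁻¹' sets i : Set Ω) =ᵐ[μ] (X' i ⁻¹' sets i : Set Ω) := by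
    intro i
    filter_upwards [heq i] with ω hω
    show (X i ω ∈ sets i) = (X' i ω ∈ sets i)
    rw [hω]
  have hall : ∀ᵐ ω ∂μ, ∀ i, X i ω = X' i ω := ae_all_iff.2 heq
  have hInter : (⋂ i ∈ S, X i ⁻¹' sets i : Set Ω) =ᵐ[μ] (⋂ i ∈ S, X' i ⁻¹' sets i : Set Ω) := by
    filter_upwards [hall] with ω hω
    show (ω ∈ ⋂ i ∈ S, X i ⁻¹' sets i) = (ω ∈ ⋂ i ∈ S, X' i ⁻¹' sets i)
    simp only [Set.mem_iInter, Set.mem_preimage, eq_iff_iff]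
    constructor <;> intro hmem j hj
    · rw [← hω j]; exact hmem j hj
    · rw [hω j]; exact hmem j hj
  calc μ (⋂ i ∈ S, X' i ⁻¹' sets i) = μ (⋂ i ∈ S, X i ⁻¹' sets i) :=
        (measure_congr hInter).symm
    _ = ∏ i ∈ S, μ (X i ⁻¹' sets i) := h S hsets
    _ = ∏ i ∈ S, μ (X' i ⁻¹' sets i) := Finset.prod_congr rfl fun i _ =>
        measure_congr (hpre i)

/-- Measurable version of the main theorem. -/
lemma tail_le_exponential_part_meas {Ω : Type*} [MeasureSpace Ω]
    [IsProbabilityMeasure (ℙ : Measure Ω)]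
    {ι : Type*} [Fintype ι] [Nonempty ι]
    (X : ι → Ω → ℝ) (K : ι → ℝ)
    (hmeas : ∀ i, Measurable (X i))
    (hindep : iIndepFun X ℙ)
    (hXint : ∀ i, Integrable (X i)) (hmean : ∀ i, ∫ ω, X i ω = 0)
    (hK : ∀ i, 0 < K i)
    (hint : ∀ i, Integrable (fun ω => Real.exp (|X i ω| / K i)))
    (horlicz : ∀ i, ∫ ω, (Real.exp (|X i ω| / K i) - 1 - |X i ω| / K i) ≤ 1)
    (B M : ℝ) (hB : B ^ 2 = ∑ i, K i ^ 2)
    (hM : M = Finset.univ.sup' Finset.univ_nonempty K)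
    (x : ℝ) :
    (ℙ {ω | x ≤ ∑ i, X i ω}).toReal ≤ Real.exp (-(x / M - B ^ 2 / M ^ 2)) := by
  have hKM : ∀ i, K i ≤ M := by
    intro i; rw [hM]; exact Finset.le_sup' K (Finset.mem_univ i)
  have hMpos : 0 < M := lt_of_lt_of_le (hK (Classical.arbitrary ι)) (hKM _)
  -- integrability of exp(M⁻¹ * X i)
  have hintt : ∀ i, Integrable (fun ω => Real.exp (M⁻¹ * X i ω)) := by
    intro i
    refine (hint i).mono (((hmeas i).const_mul _).exp).aestronglyMeasurable
      (Filter.Eventually.of_forall fun ω => ?_)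
    rw [Real.norm_eq_abs, Real.norm_eq_abs, Real.abs_exp, Real.abs_exp, Real.exp_le_exp]
    calc M⁻¹ * X i ω ≤ M⁻¹ * |X i ω| :=
          mul_le_mul_of_nonneg_left (le_abs_self _) (inv_nonneg.2 hMpos.le)
      _ = |X i ω| / M := by rw [inv_mul_eq_div]
      _ ≤ |X i ω| / K i := by
          apply div_le_div_of_nonneg_left (abs_nonneg _) (hK i) (hKM i)
  -- mgf bound per coordinate
  have hmgf : ∀ i, mgf (X i) ℙ M⁻¹ ≤ Real.exp ((K i / M) ^ 2) := by
    intro i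
    set c : ℝ := K i / M with hc_def
    have hc0 : 0 < c := div_pos (hK i) hMpos
    have hc1 : c ≤ 1 := (div_le_one hMpos).2 (hKM i)
    have hψint : Integrable (fun ω => Real.exp (|X i ω| / K i) - 1 - |X i ω| / K i) :=
      ((hint i).sub (integrable_const 1)).sub ((hXint i).abs.div_const _)
    have hRint : Integrable (fun ω =>
        1 + M⁻¹ * X i ω + c ^ 2 * (Real.exp (|X i ω| / K i) - 1 - |X i ω| / K i)) :=
      ((integrable_const 1).add ((hXint i).const_mul _)).add (hψint.const_mul _)
    have hpt : ∀ ω, Real.exp (M⁻¹ * X i ω) ≤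
        1 + M⁻¹ * X i ω + c ^ 2 * (Real.exp (|X i ω| / K i) - 1 - |X i ω| / K i) := by
      intro ω
      set y := X i ω with hy
      have habs : |M⁻¹ * y| = |y| / M := by
        rw [abs_mul, abs_inv, abs_of_pos hMpos, inv_mul_eq_div]
      have h1 : Real.exp (M⁻¹ * y) - 1 - M⁻¹ * y ≤
          Real.exp (|y| / M) - 1 - |y| / M := by
        have := psi_le_psi_abs (M⁻¹ * y)
        rwa [habs] at this
      have hcv : c * (|y| / K i) = |y| / M := by
        rw [hc_def, div_mul_div_comm, mul_comm M (K i), mul_div_mul_left _ _ (hK i).ne']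
      have h2 : Real.exp (|y| / M) - 1 - |y| / M ≤
          c ^ 2 * (Real.exp (|y| / K i) - 1 - |y| / K i) := by
        have := psi_mul_le hc0.le hc1 (v := |y| / K i)
          (div_nonneg (abs_nonneg _) (hK i).le)
        rwa [hcv] at this
      linarith
    have hintX : ∫ ω, M⁻¹ * X i ω = 0 := by
      rw [integral_const_mul, hmean i, mul_zero]
    calc mgf (X i) ℙ M⁻¹ = ∫ ω, Real.exp (M⁻¹ * X i ω) := rfl
      _ ≤ ∫ ω, (1 + M⁻¹ * X i ω + c ^ 2 * (Real.exp (|X i ω| / K i) - 1 - |X i ω| / K i)) :=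
          integral_mono (hintt i) hRint hpt
      _ = 1 + M⁻¹ * (∫ ω, X i ω)
            + c ^ 2 * ∫ ω, (Real.exp (|X i ω| / K i) - 1 - |X i ω| / K i) := by
          have h12 : Integrable (fun ω => 1 + M⁻¹ * X i ω) ℙ :=
            (integrable_const 1).add ((hXint i).const_mul _)
          have hc2 : Integrable (fun ω =>
              c ^ 2 * (Real.exp (|X i ω| / K i) - 1 - |X i ω| / K i)) ℙ :=
            hψint.const_mul _
          have h1 : Integrable (fun _ : Ω => (1 : ℝ)) ℙ := integrable_const 1
          have h2 : Integrable (fun ω => M⁻¹ * X i ω) ℙ := (hXint i).const_mul _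
          rw [integral_add h12 hc2, integral_add h1 h2,
            integral_const, integral_const_mul, integral_const_mul]
          simp [measure_univ]
      _ ≤ 1 + c ^ 2 := by
          rw [hmean i]
          have := mul_le_mul_of_nonneg_left (horlicz i) (sq_nonneg c)
          linarith
      _ ≤ Real.exp (c ^ 2) := by linarith [Real.add_one_le_exp (c ^ 2)]
  -- Chernoff
  have hsum_int : Integrable (fun ω => Real.exp (M⁻¹ * (∑ i, X i) ω)) :=
    hindep.integrable_exp_mul_sum hmeas (fun i _ => hintt i)
  have hset : {ω | x ≤ ∑ i, X i ω} = {ω | x ≤ (∑ i, X i) ω} := by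
    ext ω; simp [Finset.sum_apply]
  have hmarkov := measure_ge_le_exp_mul_mgf (μ := ℙ) (X := ∑ i, X i) (t := M⁻¹)
    x (inv_nonneg.2 hMpos.le) hsum_int
  rw [← hset] at hmarkov
  refine hmarkov.trans ?_
  have hprod : mgf (∑ i, X i) ℙ M⁻¹ ≤ Real.exp (B ^ 2 / M ^ 2) := by
    rw [hindep.mgf_sum hmeas Finset.univ]
    calc ∏ i, mgf (X i) ℙ M⁻¹ ≤ ∏ i, Real.exp ((K i / M) ^ 2) :=
          Finset.prod_le_prod (fun i _ => mgf_nonneg) (fun i _ => hmgf i)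
      _ = Real.exp (∑ i, (K i / M) ^ 2) := by rw [← Real.exp_sum]
      _ = Real.exp (B ^ 2 / M ^ 2) := by
          congr 1
          rw [hB]
          simp_rw [div_pow]
          rw [← Finset.sum_div]
  calc Real.exp (-M⁻¹ * x) * mgf (∑ i, X i) ℙ M⁻¹
      ≤ Real.exp (-M⁻¹ * x) * Real.exp (B ^ 2 / M ^ 2) := by
        gcongr
    _ = Real.exp (-(x / M - B ^ 2 / M ^ 2)) := by
        rw [← Real.exp_add]
        congr 1
        field_simp
        ring

/-- Theorem 2, second case: for independent mean-zero `Xᵢ` with admissible `ψ₁₁`-Orlicz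
constants `Kᵢ`, with `B² = ∑ Kᵢ²` and `M = max Kᵢ`, one has
`P(Sₙ ≥ x) ≤ exp(−(x/M − B²/M²))` for `x ≥ 2B²/M`. -/
theorem tail_le_exponential_part {Ω : Type*} [MeasureSpace Ω]
    [IsProbabilityMeasure (ℙ : Measure Ω)]
    {ι : Type*} [Fintype ι] [Nonempty ι]
    (X : ι → Ω → ℝ) (K : ι → ℝ)
    (hindep : iIndepFun X ℙ)
    (hXint : ∀ i, Integrable (X i)) (hmean : ∀ i, ∫ ω, X i ω = 0)
    (hK : ∀ i, 0 < K i)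
    (hint : ∀ i, Integrable (fun ω => Real.exp (|X i ω| / K i)))
    (horlicz : ∀ i, ∫ ω, (Real.exp (|X i ω| / K i) - 1 - |X i ω| / K i) ≤ 1)
    (B M : ℝ) (hB : B ^ 2 = ∑ i, K i ^ 2)
    (hM : M = Finset.univ.sup' Finset.univ_nonempty K)
    (x : ℝ) (hx : 2 * B ^ 2 / M ≤ x) :
    (ℙ {ω | x ≤ ∑ i, X i ω}).toReal ≤ Real.exp (-(x / M - B ^ 2 / M ^ 2)) := by
  -- replace X by measurable modifications
  set X' : ι → Ω → ℝ := fun i => (hXint i).1.mk (X i) with hX'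
  have heq : ∀ i, X i =ᵐ[ℙ] X' i := fun i => (hXint i).1.ae_eq_mk
  have hmeas' : ∀ i, Measurable (X' i) := fun i =>
    (hXint i).1.stronglyMeasurable_mk.measurable
  have hindep' : iIndepFun X' ℙ :=
    iIndepFun_congr_ae hindep heq
  have hXint' : ∀ i, Integrable (X' i) := fun i => (hXint i).congr (heq i)
  have hmean' : ∀ i, ∫ ω, X' i ω = 0 := fun i => by
    rw [← integral_congr_ae (heq i)]; exact hmean i
  have hint' : ∀ i, Integrable (fun ω => Real.exp (|X' i ω| / K i)) := by
    intro i
    refine (hint i).congr ?_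
    filter_upwards [heq i] with ω hω
    simp [hω]
  have horlicz' : ∀ i, ∫ ω, (Real.exp (|X' i ω| / K i) - 1 - |X' i ω| / K i) ≤ 1 := by
    intro i
    rw [← integral_congr_ae
      (f := fun ω => Real.exp (|X i ω| / K i) - 1 - |X i ω| / K i)
      (g := fun ω =>
      Real.exp (|X' i ω| / K i) - 1 - |X' i ω| / K i)
      (by filter_upwards [heq i] with ω hω; rw [hω])]
    exact horlicz i
  have hsets : (ℙ {ω | x ≤ ∑ i, X i ω}) = (ℙ {ω | x ≤ ∑ i, X' i ω}) := by
    apply measure_congr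
    have hall : ∀ᵐ ω ∂(ℙ : Measure Ω), ∀ i, X i ω = X' i ω := ae_all_iff.2 heq
    filter_upwards [hall] with ω hω
    show (ω ∈ {ω | x ≤ ∑ i, X i ω}) = (ω ∈ {ω | x ≤ ∑ i, X' i ω})
    have hsum : ∑ i, X i ω = ∑ i, X' i ω := Finset.sum_congr rfl fun i _ => hω i
    simp only [Set.mem_setOf_eq, hsum]
  rw [hsets]
  exact tail_le_exponential_part_meas X' K hmeas' hindep' hXint' hmean' hK hint'
    horlicz' B M hB hM x
end

section
/- Let ε > 0 and let X₁, …, Xₙ be independent real random variables on a probability space with E[Xᵢ] = 0 for each i, and let K₁, …, Kₙ > 0 be such that for each i, exp(|Xᵢ|/Kᵢ) is integrable and E[exp(|Xᵢ|/Kᵢ) − 1 − |Xᵢ|/Kᵢ] ≤ ε. Set Sₙ = X₁ + ⋯ + Xₙ, B² = ε·(K₁² + ⋯ + Kₙ²), and M = max(K₁, …, Kₙ). Then for every real x ≥ 0, P(Sₙ ≥ x) ≤ exp(−min(x²/(4B²), x/(2M))). -/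
open MeasureTheory ProbabilityTheory Finset


lemma psi_scale {a u : ℝ} (ha : 0 ≤ a) (ha1 : a ≤ 1) (hu : 0 ≤ u) :
    Real.exp (a*u) - 1 - a*u ≤ a^2 * (Real.exp u - 1 - u) := by
  have hconv : ∀ v : ℝ, Real.exp (a*v) - 1 ≤ a * (Real.exp v - 1) := by
    intro v
    have := convexOn_exp.2 (Set.mem_univ v) (Set.mem_univ (0:ℝ)) ha
      (show (0:ℝ) ≤ 1 - a by linarith) (show a + (1-a) = 1 by ring)
    simp only [smul_eq_mul, mul_zero, add_zero, Real.exp_zero, mul_one] at this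
    linarith
  set f : ℝ → ℝ := fun v => a^2 * (Real.exp v - 1 - v) - (Real.exp (a*v) - 1 - a*v) with hf
  have hderiv : ∀ v : ℝ, HasDerivAt f (a^2 * (Real.exp v - 1) - a * (Real.exp (a*v) - 1)) v := by
    intro v
    have h1 : HasDerivAt (fun w : ℝ => a * w) a v := by
      simpa using (hasDerivAt_id v).const_mul a
    have h2 : HasDerivAt (fun w : ℝ => Real.exp (a*w)) (Real.exp (a*v) * a) v := h1.exp
    have h3 : HasDerivAt (fun w : ℝ => Real.exp w) (Real.exp v) v := Real.hasDerivAt_exp v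
    have := (((h3.sub_const 1).sub (hasDerivAt_id v)).const_mul (a^2)).sub
      ((h2.sub_const 1).sub h1)
    exact this.congr_deriv (by ring)
  have hmono : MonotoneOn f (Set.Ici 0) := by
    apply monotoneOn_of_deriv_nonneg (convex_Ici 0)
    · exact (Continuous.continuousOn (by continuity))
    · intro v hv
      exact (hderiv v).differentiableAt.differentiableWithinAt
    · intro v hv
      rw [(hderiv v).deriv]
      nlinarith [mul_le_mul_of_nonneg_left (hconv v) ha]
  have h0 : f 0 = 0 := by simp [hf]
  have := hmono (Set.self_mem_Ici) (Set.mem_Ici.mpr hu) hu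
  rw [h0] at this
  simp only [hf] at this
  linarith

lemma exp_le_psi (t : ℝ) : Real.exp t ≤ 1 + t + (Real.exp |t| - 1 - |t|) := by
  rcases le_or_gt 0 t with h | h
  · rw [abs_of_nonneg h]
    linarith
  · rw [abs_of_neg h]
    have hs := (Real.self_le_sinh_iff.mpr (by linarith : (0:ℝ) ≤ -t))
    rw [Real.sinh_eq, neg_neg] at hs
    have := Real.exp_pos t
    linarith


lemma iIndepFun_of_ae_eq {Ω ι : Type*} [MeasureSpace Ω] [Countable ι]
    {X Y : ι → Ω → ℝ}
    (h : iIndepFun X ℙ) (hXY : ∀ i, X i =ᵐ[ℙ] Y i) :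
    iIndepFun Y ℙ := by
  rw [iIndepFun_iff_measure_inter_preimage_eq_mul] at h ⊢
  intro S sets hsets
  have hae : ∀ᵐ ω ∂(ℙ : Measure Ω), ∀ i, X i ω = Y i ω := ae_all_iff.mpr hXY
  have h1 : ∀ i : ι, (ℙ : Measure Ω) (X i ⁻¹' sets i) = ℙ (Y i ⁻¹' sets i) := by
    intro i
    apply measure_congr
    filter_upwards [hXY i] with ω hω
    show (X i ω ∈ sets i) = (Y i ω ∈ sets i)
    rw [hω]
  have h2 : (ℙ : Measure Ω) (⋂ i ∈ S, X i ⁻¹' sets i) = ℙ (⋂ i ∈ S, Y i ⁻¹' sets i) := by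
    apply measure_congr
    filter_upwards [hae] with ω hω
    show (ω ∈ ⋂ i ∈ S, X i ⁻¹' sets i) = (ω ∈ ⋂ i ∈ S, Y i ⁻¹' sets i)
    simp only [eq_iff_iff, Set.mem_iInter, Set.mem_preimage]
    constructor
    · intro h i hi
      rw [← hω i]; exact h i hi
    · intro h i hi
      rw [hω i]; exact h i hi
  rw [← h2, h S hsets]
  exact Finset.prod_congr rfl fun i _ => h1 i

lemma mgf_le_of_orlicz {Ω : Type*} [MeasureSpace Ω] [IsProbabilityMeasure (ℙ : Measure Ω)]
    {Y : Ω → ℝ} {K ε c : ℝ} (hK : 0 < K) (hε : 0 < ε)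
    (hYm : Measurable Y) (hYint : Integrable Y) (hmean : ∫ ω, Y ω = 0)
    (hexp : Integrable (fun ω => Real.exp (|Y ω| / K)))
    (horl : ∫ ω, (Real.exp (|Y ω| / K) - 1 - |Y ω| / K) ≤ ε)
    (hc : 0 ≤ c) (hcK : c * K ≤ 1) :
    mgf Y ℙ c ≤ Real.exp (ε * c^2 * K^2) := by
  -- pointwise bound
  have hpt : ∀ ω, Real.exp (c * Y ω) ≤
      1 + c * Y ω + (c*K)^2 * (Real.exp (|Y ω| / K) - 1 - |Y ω| / K) := by
    intro ω
    have h1 := exp_le_psi (c * Y ω)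
    have habs : |c * Y ω| = (c*K) * (|Y ω| / K) := by
      rw [abs_mul, abs_of_nonneg hc]
      field_simp
    have h2 : Real.exp |c * Y ω| - 1 - |c * Y ω| ≤
        (c*K)^2 * (Real.exp (|Y ω| / K) - 1 - |Y ω| / K) := by
      rw [habs]
      exact psi_scale (by positivity) hcK (by positivity)
    linarith
  -- integrability of lhs
  have hmeas : AEStronglyMeasurable (fun ω => Real.exp (c * Y ω)) ℙ :=
    ((hYm.const_mul c).exp).aestronglyMeasurable
  have hlhs : Integrable (fun ω => Real.exp (c * Y ω)) := by
    apply hexp.mono hmeas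
    filter_upwards with ω
    rw [Real.norm_eq_abs, Real.norm_eq_abs, abs_of_nonneg (Real.exp_pos _).le,
      abs_of_nonneg (Real.exp_pos _).le]
    apply Real.exp_le_exp.mpr
    calc c * Y ω ≤ c * |Y ω| := by
          exact mul_le_mul_of_nonneg_left (le_abs_self _) hc
      _ ≤ |Y ω| / K := by
          rw [le_div_iff₀ hK]
          nlinarith [abs_nonneg (Y ω)]
  -- integrability of rhs
  have hpsiint : Integrable (fun ω => Real.exp (|Y ω| / K) - 1 - |Y ω| / K) :=
    (hexp.sub (integrable_const 1)).sub ((hYint.abs).div_const K)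
  have hrhs : Integrable (fun ω =>
      1 + c * Y ω + (c*K)^2 * (Real.exp (|Y ω| / K) - 1 - |Y ω| / K)) :=
    ((integrable_const 1).add (hYint.const_mul c)).add (hpsiint.const_mul _)
  have hint1 : ∫ ω, (1 + c * Y ω) = 1 := by
    rw [integral_add (integrable_const 1) (hYint.const_mul c), integral_const,
      integral_const_mul, hmean]
    simp
  have hle : mgf Y ℙ c ≤ 1 + (c*K)^2 * ε := by
    have h1 : mgf Y ℙ c ≤ ∫ ω, (1 + c * Y ω + (c*K)^2 * (Real.exp (|Y ω| / K) - 1 - |Y ω| / K)) := by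
      unfold mgf
      exact integral_mono hlhs hrhs hpt
    have hA : Integrable (fun ω => 1 + c * Y ω) := by
      simpa using (integrable_const (1:ℝ)).add (hYint.const_mul c)
    have hB : Integrable (fun ω => (c*K)^2 * (Real.exp (|Y ω| / K) - 1 - |Y ω| / K)) :=
      hpsiint.const_mul _
    have h2 : ∫ ω, (1 + c * Y ω + (c*K)^2 * (Real.exp (|Y ω| / K) - 1 - |Y ω| / K))
        = 1 + (c*K)^2 * ∫ ω, (Real.exp (|Y ω| / K) - 1 - |Y ω| / K) := by
      rw [integral_add hA hB, hint1, integral_const_mul]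
    rw [h2] at h1
    have := mul_le_mul_of_nonneg_left horl (sq_nonneg (c*K))
    linarith
  calc mgf Y ℙ c ≤ 1 + (c*K)^2 * ε := hle
    _ ≤ Real.exp ((c*K)^2 * ε) := by linarith [Real.add_one_le_exp ((c*K)^2 * ε)]
    _ = Real.exp (ε * c^2 * K^2) := by ring_nf

/-- Theorem 2.ε, min form: for independent mean-zero `Xᵢ` with
`E[exp(|Xᵢ|/Kᵢ) − 1 − |Xᵢ|/Kᵢ] ≤ ε`, with `B² = ε ∑ Kᵢ²` and `M = max Kᵢ`,
one has `P(Sₙ ≥ x) ≤ exp(−min(x²/(4B²), x/(2M)))` for all `x ≥ 0`. -/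
theorem tail_le_min_form_eps {Ω : Type*} [MeasureSpace Ω]
    [IsProbabilityMeasure (ℙ : Measure Ω)]
    {ι : Type*} [Fintype ι] [Nonempty ι]
    (ε : ℝ) (hε : 0 < ε)
    (X : ι → Ω → ℝ) (K : ι → ℝ)
    (hindep : iIndepFun X ℙ)
    (hXint : ∀ i, Integrable (X i)) (hmean : ∀ i, ∫ ω, X i ω = 0)
    (hK : ∀ i, 0 < K i)
    (hint : ∀ i, Integrable (fun ω => Real.exp (|X i ω| / K i)))
    (horlicz : ∀ i, ∫ ω, (Real.exp (|X i ω| / K i) - 1 - |X i ω| / K i) ≤ ε)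
    (B M : ℝ) (hB : B ^ 2 = ε * ∑ i, K i ^ 2)
    (hM : M = Finset.univ.sup' Finset.univ_nonempty K)
    (x : ℝ) (hx0 : 0 ≤ x) :
    (ℙ {ω | x ≤ ∑ i, X i ω}).toReal ≤
      Real.exp (-(min (x ^ 2 / (4 * B ^ 2)) (x / (2 * M)))) := by
  classical
  -- measurable modifications
  set Y : ι → Ω → ℝ := fun i => (hXint i).1.mk (X i) with hY
  have hXY : ∀ i, X i =ᵐ[ℙ] Y i := fun i => (hXint i).1.ae_eq_mk
  have hYm : ∀ i, Measurable (Y i) := fun i => (hXint i).1.stronglyMeasurable_mk.measurable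
  have hYindep : iIndepFun Y ℙ := iIndepFun_of_ae_eq hindep hXY
  have hYint : ∀ i, Integrable (Y i) := fun i => (hXint i).congr (hXY i)
  have hYmean : ∀ i, ∫ ω, Y i ω = 0 := fun i => by
    rw [← integral_congr_ae (hXY i)]; exact hmean i
  have hYexp : ∀ i, Integrable (fun ω => Real.exp (|Y i ω| / K i)) := fun i =>
    (hint i).congr ((hXY i).mono fun ω h => by dsimp only; rw [h])
  have hYorl : ∀ i, ∫ ω, (Real.exp (|Y i ω| / K i) - 1 - |Y i ω| / K i) ≤ ε := by
    intro i
    have he : (fun ω => Real.exp (|X i ω| / K i) - 1 - |X i ω| / K i) =ᵐ[ℙ]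
        (fun ω => Real.exp (|Y i ω| / K i) - 1 - |Y i ω| / K i) :=
      (hXY i).mono fun ω h => by dsimp only; rw [h]
    rw [← integral_congr_ae he]
    exact horlicz i
  -- measure set equality
  have hmeq : ℙ {ω | x ≤ ∑ i, X i ω} = ℙ {ω | x ≤ ∑ i, Y i ω} := by
    apply measure_congr
    filter_upwards [ae_all_iff.mpr hXY] with ω hω
    show (x ≤ ∑ i, X i ω) = (x ≤ ∑ i, Y i ω)
    rw [Finset.sum_congr rfl fun i _ => hω i]
  -- positivity facts
  have hMK : ∀ i, K i ≤ M := fun i => hM ▸ Finset.le_sup' K (Finset.mem_univ i)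
  have hMpos : 0 < M := lt_of_lt_of_le (hK (Classical.arbitrary ι)) (hMK _)
  have hB2pos : 0 < B ^ 2 := by
    rw [hB]
    exact mul_pos hε (Finset.sum_pos (fun i _ => pow_pos (hK i) 2) Finset.univ_nonempty)
  -- Chernoff step
  have key : ∀ c : ℝ, 0 ≤ c → c * M ≤ 1 →
      (ℙ {ω | x ≤ ∑ i, X i ω}).toReal ≤ Real.exp (-(c*x) + c^2 * B^2) := by
    intro c hc hcM
    have hcK : ∀ i, c * K i ≤ 1 := fun i =>
      le_trans (mul_le_mul_of_nonneg_left (hMK i) hc) hcM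
    have hexpint : ∀ i, Integrable (fun ω => Real.exp (c * Y i ω)) := by
      intro i
      apply (hYexp i).mono ((hYm i).const_mul c).exp.aestronglyMeasurable
      filter_upwards with ω
      rw [Real.norm_eq_abs, Real.norm_eq_abs, abs_of_nonneg (Real.exp_pos _).le,
        abs_of_nonneg (Real.exp_pos _).le]
      apply Real.exp_le_exp.mpr
      calc c * Y i ω ≤ c * |Y i ω| := mul_le_mul_of_nonneg_left (le_abs_self _) hc
        _ ≤ |Y i ω| / K i := by
            rw [le_div_iff₀ (hK i)]
            nlinarith [abs_nonneg (Y i ω), hK i, hcK i]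
    have hsumint : Integrable (fun ω => Real.exp (c * (∑ i, Y i) ω)) :=
      hYindep.integrable_exp_mul_sum hYm (fun i _ => hexpint i)
    have hch := measure_ge_le_exp_mul_mgf (μ := ℙ) (X := ∑ i, Y i) x hc hsumint
    have hset : {ω | x ≤ (∑ i, Y i) ω} = {ω | x ≤ ∑ i, Y i ω} := by
      ext ω; simp [Finset.sum_apply]
    rw [hset] at hch
    have hmgf : mgf (∑ i, Y i) ℙ c ≤ Real.exp (c^2 * B^2) := by
      rw [hYindep.mgf_sum hYm]
      calc ∏ i, mgf (Y i) ℙ c ≤ ∏ i, Real.exp (ε * c^2 * K i^2) := by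
            apply Finset.prod_le_prod (fun i _ => mgf_nonneg) (fun i _ =>
              mgf_le_of_orlicz (hK i) hε (hYm i) (hYint i) (hYmean i) (hYexp i) (hYorl i)
                hc (hcK i))
        _ = Real.exp (∑ i, ε * c^2 * K i^2) := (Real.exp_sum _ _).symm
        _ = Real.exp (c^2 * B^2) := by
            rw [hB]
            congr 1
            rw [← Finset.mul_sum]
            ring
    calc (ℙ {ω | x ≤ ∑ i, X i ω}).toReal
        = (ℙ {ω | x ≤ ∑ i, Y i ω}).toReal := by rw [hmeq]
      _ ≤ Real.exp (-c * x) * mgf (∑ i, Y i) ℙ c := hch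
      _ ≤ Real.exp (-c * x) * Real.exp (c^2 * B^2) :=
          mul_le_mul_of_nonneg_left hmgf (Real.exp_pos _).le
      _ = Real.exp (-(c*x) + c^2 * B^2) := by rw [← Real.exp_add]; ring_nf
  -- choose c
  rcases le_or_gt (x / (2 * B^2)) (1 / M) with hcase | hcase
  · set c := x / (2 * B^2) with hc
    have hc0 : 0 ≤ c := by positivity
    have hcM : c * M ≤ 1 := by
      rw [← le_div_iff₀ hMpos]; exact hcase
    refine le_trans (key c hc0 hcM) (Real.exp_le_exp.mpr ?_)
    have heq : -(c*x) + c^2 * B^2 = -(x^2 / (4 * B^2)) := by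
      rw [hc]; field_simp; ring
    rw [heq]
    have := min_le_left (x ^ 2 / (4 * B ^ 2)) (x / (2 * M))
    linarith
  · set c := 1 / M with hc
    have hc0 : 0 ≤ c := by positivity
    have hcM : c * M ≤ 1 := by
      rw [hc]; field_simp; norm_num
    refine le_trans (key c hc0 hcM) (Real.exp_le_exp.mpr ?_)
    have hcase' : 2 * B^2 < x * M := by
      rw [hc, div_lt_div_iff₀ hMpos (by positivity : (0:ℝ) < 2 * B^2)] at hcase
      linarith
    have heq : -(c*x) + c^2 * B^2 = -(x/M) + B^2 / M^2 := by
      rw [hc]; field_simp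
    rw [heq]
    have h2 : B^2 / M^2 < x / (2*M) := by
      rw [div_lt_div_iff₀ (by positivity) (by positivity)]
      nlinarith
    have hid : x / M = 2 * (x / (2*M)) := by
      field_simp
    have := min_le_right (x ^ 2 / (4 * B ^ 2)) (x / (2 * M))
    linarith
end
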